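/- arXiv:1505.00440 — 6 statements merged into one kernel-verified Lean document; each statement's English description precedes it below -/
import Mathlib

section
/- For every natural number n ≥ 1, the alternating binomial sum ∑_{k=1}^{n} (-1)^k C(n,k)/k² equals -∑_{k=1}^{n} H_k/k, where H_k = ∑_{j=1}^{k} 1/j is the k-th harmonic number. -/
open Finset

/-- The k-th harmonic number. -/
noncomputable def H (k : ℕ) : ℝ := ∑ j ∈ Finset.Icc 1 k, (1 : ℝ) / j

lemma H_succ (n : ℕ) : H (n+1) = H n + 1/(n+1) := by
  unfold H
  rw [Finset.sum_Icc_succ_top (by omega)]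
  push_cast
  ring

lemma alt_sum (m : ℕ) (hm : 1 ≤ m) :
    ∑ k ∈ Icc 1 m, (-1:ℝ)^k * m.choose k = -1 := by
  have h0 := add_pow (-1:ℝ) 1 m
  simp only [one_pow, mul_one] at h0
  rw [neg_add_cancel, zero_pow (by omega)] at h0
  have hsplit : ∑ k ∈ Finset.Ico 0 (m+1), (-1:ℝ)^k * m.choose k
      = (-1:ℝ)^0 * (m.choose 0 : ℝ) + ∑ k ∈ Finset.Ico 1 (m+1), (-1:ℝ)^k * m.choose k :=
    Finset.sum_eq_sum_Ico_succ_bot (by omega) _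
  rw [← Finset.range_eq_Ico, Finset.Ico_add_one_right_eq_Icc] at hsplit
  rw [← h0] at hsplit
  simp at hsplit
  linarith

lemma lemA (n : ℕ) :
    ∑ k ∈ Icc 1 n, (-1:ℝ)^k * n.choose k / k = - H n := by
  induction n with
  | zero => simp [H]
  | succ n ih =>
    have key : ∀ k ∈ Icc 1 (n+1),
        (-1:ℝ)^k * ((n+1).choose k) / k
          = (-1:ℝ)^k * (n.choose k) / k + (1/(n+1)) * ((-1:ℝ)^k * ((n+1).choose k)) := by
      intro k hk
      simp only [Finset.mem_Icc] at hk
      obtain ⟨j, rfl⟩ : ∃ j, k = j + 1 := ⟨k - 1, by omega⟩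
      have hc : ((n:ℝ)+1) * n.choose j = ((n+1).choose (j+1)) * ((j:ℝ)+1) := by
        exact_mod_cast Nat.add_one_mul_choose_eq n j
      have h1 : ((j:ℝ)+1) ≠ 0 := by positivity
      have h2 : ((n:ℝ)+1) ≠ 0 := by positivity
      have hdiv : (n.choose j : ℝ)/((j:ℝ)+1) = ((n+1).choose (j+1) : ℝ)/((n:ℝ)+1) := by
        rw [div_eq_div_iff h1 h2]; linear_combination hc
      have hp : (((n+1).choose (j+1) : ℝ)) = (n.choose j : ℝ) + (n.choose (j+1) : ℝ) := by
        rw [Nat.choose_succ_succ]; push_cast; ring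
      push_cast
      linear_combination ((-1:ℝ)^(j+1)) * hdiv + ((-1:ℝ)^(j+1)/((j:ℝ)+1)) * hp
    rw [Finset.sum_congr rfl key, Finset.sum_add_distrib, ← Finset.mul_sum,
      alt_sum (n+1) (by omega), Finset.sum_Icc_succ_top (by omega : 1 ≤ n+1),
      Nat.choose_succ_self, ih, H_succ]
    push_cast
    ring

theorem stmt_0 (n : ℕ) (hn : 1 ≤ n) :
    ∑ k ∈ Finset.Icc 1 n, (-1 : ℝ) ^ k * (n.choose k) / (k : ℝ) ^ 2 =
      - ∑ k ∈ Finset.Icc 1 n, H k / k := by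
  clear hn
  induction n with
  | zero => simp
  | succ n ih =>
    have key : ∀ k ∈ Icc 1 (n+1),
        (-1:ℝ)^k * ((n+1).choose k) / (k:ℝ)^2
          = (-1:ℝ)^k * (n.choose k) / (k:ℝ)^2
            + (1/(n+1)) * ((-1:ℝ)^k * ((n+1).choose k) / k) := by
      intro k hk
      simp only [Finset.mem_Icc] at hk
      obtain ⟨j, rfl⟩ : ∃ j, k = j + 1 := ⟨k - 1, by omega⟩
      have hc : ((n:ℝ)+1) * n.choose j = ((n+1).choose (j+1)) * ((j:ℝ)+1) := by
        exact_mod_cast Nat.add_one_mul_choose_eq n j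
      have h1 : ((j:ℝ)+1) ≠ 0 := by positivity
      have h2 : ((n:ℝ)+1) ≠ 0 := by positivity
      have hdiv : (n.choose j : ℝ)/((j:ℝ)+1) = ((n+1).choose (j+1) : ℝ)/((n:ℝ)+1) := by
        rw [div_eq_div_iff h1 h2]; linear_combination hc
      have hp : (((n+1).choose (j+1) : ℝ)) = (n.choose j : ℝ) + (n.choose (j+1) : ℝ) := by
        rw [Nat.choose_succ_succ]; push_cast; ring
      push_cast
      linear_combination (norm := skip) ((-1:ℝ)^(j+1)/((j:ℝ)+1)) * hdiv + ((-1:ℝ)^(j+1)/((j:ℝ)+1)^2) * hp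
      field_simp
      ring
    rw [Finset.sum_congr rfl key, Finset.sum_add_distrib, ← Finset.mul_sum,
      lemA (n+1), Finset.sum_Icc_succ_top (by omega : 1 ≤ n+1),
      Nat.choose_succ_self, ih,
      Finset.sum_Icc_succ_top (by omega : 1 ≤ n+1)]
    push_cast
    ring
end

section
/- For every natural number m ≥ 1, ∫_0^1 (1/x) ∫_0^x (1/y) ∫_0^y (1/z) [(x-y)^m - (x-y+z)^m] dz dy dx = -(1/m) ∑_{k=1}^{m} 1/k², where each inner integrand extends continuously (it is a polynomial divided by the corresponding variable with the singularity removable). -/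
open intervalIntegral MeasureTheory Finset

/-- Interval integrals agree if the integrands agree away from `0`. -/
lemma integral_congr_ne_zero {f g : ℝ → ℝ} (a b : ℝ) (h : ∀ t : ℝ, t ≠ 0 → f t = g t) :
    ∫ t in a..b, f t = ∫ t in a..b, g t := by
  apply intervalIntegral.integral_congr_ae
  have h0 : ∀ᵐ t : ℝ, t ≠ (0:ℝ) := by
    rw [MeasureTheory.ae_iff]
    simp only [ne_eq, not_not, Set.setOf_eq_eq_singleton]
    exact Real.volume_singleton
  filter_upwards [h0] with t ht _
  exact h t ht

/-- The Beta integral for natural exponents. -/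
lemma beta_nat : ∀ (n k : ℕ) (x : ℝ),
    ∫ y in (0:ℝ)..x, y ^ k * (x - y) ^ n
      = x ^ (k + n + 1) * (Nat.factorial k * Nat.factorial n) / Nat.factorial (k + n + 1) := by
  intro n
  induction n with
  | zero =>
    intro k x
    simp only [pow_zero, mul_one, Nat.factorial_zero, Nat.cast_one, add_zero]
    rw [integral_pow, Nat.factorial_succ]
    have h1 : (Nat.factorial k : ℝ) ≠ 0 := Nat.cast_ne_zero.2 (Nat.factorial_ne_zero k)
    have h2 : (k : ℝ) + 1 ≠ 0 := by positivity
    push_cast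
    field_simp
    ring
  | succ n ih =>
    intro k x
    have h2 : (k : ℝ) + 1 ≠ 0 := by positivity
    have hu : ∀ y ∈ Set.uIcc (0:ℝ) x,
        HasDerivAt (fun y : ℝ => y ^ (k+1) / ((k:ℝ)+1)) (y ^ k) y := by
      intro y _
      have h := (hasDerivAt_pow (k+1) y).div_const ((k:ℝ)+1)
      refine h.congr_deriv ?_
      push_cast
      field_simp
    have hv : ∀ y ∈ Set.uIcc (0:ℝ) x,
        HasDerivAt (fun y : ℝ => (x - y) ^ (n+1)) (-(((n:ℝ)+1) * (x - y) ^ n)) y := by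
      intro y _
      have h1 : HasDerivAt (fun y : ℝ => x - y) (-1) y := by
        simpa using (hasDerivAt_id y).const_sub x
      have h := h1.pow (n+1)
      refine h.congr_deriv ?_
      push_cast
      ring
    have hu' : IntervalIntegrable (fun y : ℝ => y ^ k) volume 0 x :=
      (continuous_pow k).intervalIntegrable 0 x
    have hv' : IntervalIntegrable (fun y : ℝ => -(((n:ℝ)+1) * (x - y) ^ n)) volume 0 x := by
      apply Continuous.intervalIntegrable
      fun_prop
    have h := intervalIntegral.integral_mul_deriv_eq_deriv_mul hu hv hu' hv'
    have hL : ∫ y in (0:ℝ)..x, (y ^ (k+1) / ((k:ℝ)+1)) * (-(((n:ℝ)+1) * (x - y) ^ n))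
        = (-((n:ℝ)+1) / ((k:ℝ)+1)) * ∫ y in (0:ℝ)..x, y ^ (k+1) * (x - y) ^ n := by
      rw [← intervalIntegral.integral_const_mul]
      apply intervalIntegral.integral_congr
      intro y _
      ring
    rw [hL, ih (k+1) x] at h
    have e1 : k + 1 + n + 1 = k + (n+1) + 1 := by omega
    rw [e1] at h
    simp only [sub_self, ne_eq, Nat.succ_ne_zero, not_false_iff, zero_pow, zero_div,
      zero_mul, mul_zero, zero_sub, sub_zero, neg_neg] at h
    have hval : (-((n:ℝ)+1) / ((k:ℝ)+1)) * (x ^ (k + (n+1) + 1) *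
          ((Nat.factorial (k+1) : ℝ) * Nat.factorial n) / Nat.factorial (k + (n+1) + 1))
        = -(x ^ (k + (n+1) + 1) * ((Nat.factorial k : ℝ) * Nat.factorial (n+1))
            / Nat.factorial (k + (n+1) + 1)) := by
      rw [Nat.factorial_succ k, Nat.factorial_succ n]
      have h1 : (Nat.factorial (k + (n+1) + 1) : ℝ) ≠ 0 :=
        Nat.cast_ne_zero.2 (Nat.factorial_ne_zero _)
      push_cast
      field_simp
    rw [hval] at h
    linarith [h]

/-- The innermost integral. -/
lemma inner_int (m : ℕ) (x y : ℝ) :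
    ∫ z in (0:ℝ)..y, (1 / z) * ((x - y) ^ m - (x - y + z) ^ m)
      = -∑ k ∈ Finset.range m,
          (m.choose k : ℝ) * (x - y) ^ k * (y ^ (m - k) / ((m - k : ℕ) : ℝ)) := by
  have hstep : ∫ z in (0:ℝ)..y, (1 / z) * ((x - y) ^ m - (x - y + z) ^ m)
      = ∫ z in (0:ℝ)..y, -∑ k ∈ Finset.range m,
          (m.choose k : ℝ) * (x - y) ^ k * z ^ (m - 1 - k) := by
    apply integral_congr_ne_zero
    intro z hz
    have key : (x - y) ^ m - (x - y + z) ^ m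
        = z * (-∑ k ∈ Finset.range m, (m.choose k : ℝ) * (x - y) ^ k * z ^ (m - 1 - k)) := by
      rw [add_pow, Finset.sum_range_succ]
      simp only [Nat.choose_self, Nat.cast_one, mul_one, Nat.sub_self, pow_zero]
      rw [mul_neg, Finset.mul_sum]
      rw [show ∀ b : ℝ, (x-y) ^ m - (b + (x-y) ^ m) = -b from fun b => by ring]
      congr 1
      apply Finset.sum_congr rfl
      intro k hk
      have hk' : k < m := Finset.mem_range.1 hk
      have e : m - 1 - k + 1 = m - k := by omega
      rw [← e, pow_succ]
      ring
    rw [key, one_div, inv_mul_cancel_left₀ hz]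
  rw [hstep, intervalIntegral.integral_neg, intervalIntegral.integral_finset_sum]
  · congr 1
    apply Finset.sum_congr rfl
    intro k hk
    have hk' : k < m := Finset.mem_range.1 hk
    rw [intervalIntegral.integral_const_mul, integral_pow]
    have e : m - 1 - k + 1 = m - k := by omega
    have hne : (m - 1 - k : ℕ) + 1 ≠ 0 := by omega
    rw [zero_pow hne]
    rw [show ((m - 1 - k : ℕ) : ℝ) + 1 = ((m - k : ℕ) : ℝ) by rw [← e]; push_cast; ring]
    rw [e]
    ring
  · intro k _
    apply Continuous.intervalIntegrable
    fun_prop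

/-- The middle integral. -/
lemma mid_int (m : ℕ) (hm : 1 ≤ m) (x : ℝ) :
    ∫ y in (0:ℝ)..x, (1 / y) * (-∑ k ∈ Finset.range m,
          (m.choose k : ℝ) * (x - y) ^ k * (y ^ (m - k) / ((m - k : ℕ) : ℝ)))
      = -(∑ k ∈ Finset.range m, 1 / ((m - k : ℕ) : ℝ) ^ 2) * x ^ m := by
  have hstep : ∫ y in (0:ℝ)..x, (1 / y) * (-∑ k ∈ Finset.range m,
          (m.choose k : ℝ) * (x - y) ^ k * (y ^ (m - k) / ((m - k : ℕ) : ℝ)))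
      = ∫ y in (0:ℝ)..x, -∑ k ∈ Finset.range m,
          ((m.choose k : ℝ) / ((m - k : ℕ) : ℝ)) * (y ^ (m - 1 - k) * (x - y) ^ k) := by
    apply integral_congr_ne_zero
    intro y hy
    rw [mul_neg, Finset.mul_sum]
    congr 1
    apply Finset.sum_congr rfl
    intro k hk
    have hk' : k < m := Finset.mem_range.1 hk
    have e : m - k = m - 1 - k + 1 := by omega
    rw [e, pow_succ']
    field_simp
  rw [hstep, intervalIntegral.integral_neg, intervalIntegral.integral_finset_sum]
  · rw [neg_mul, neg_inj, Finset.sum_mul]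
    apply Finset.sum_congr rfl
    intro k hk
    have hk' : k < m := Finset.mem_range.1 hk
    rw [intervalIntegral.integral_const_mul, beta_nat k (m - 1 - k) x]
    have e : m - 1 - k + k + 1 = m := by omega
    rw [e]
    have hch : (m.choose k : ℝ) * (Nat.factorial k) * (Nat.factorial (m - k)) = Nat.factorial m := by
      exact_mod_cast congrArg (Nat.cast : ℕ → ℝ) (Nat.choose_mul_factorial_mul_factorial hk'.le)
    have hsub : Nat.factorial (m - k) = (m - k) * Nat.factorial (m - 1 - k) := by
      have e2 : m - k = (m - 1 - k) + 1 := by omega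
      rw [e2, Nat.factorial_succ]
    have h1 : ((m - k : ℕ) : ℝ) ≠ 0 := by
      simp only [ne_eq, Nat.cast_eq_zero]
      omega
    have h2 : (Nat.factorial m : ℝ) ≠ 0 := Nat.cast_ne_zero.2 (Nat.factorial_ne_zero m)
    rw [hsub] at hch
    push_cast at hch
    have key : (m.choose k : ℝ) * ((Nat.factorial (m - 1 - k) : ℝ) * (Nat.factorial k : ℝ))
        / (Nat.factorial m : ℝ) = 1 / ((m - k : ℕ) : ℝ) := by
      rw [div_eq_div_iff h2 h1]
      linear_combination hch
    have hrw : (m.choose k : ℝ) / ((m - k : ℕ) : ℝ)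
          * (x ^ m * ((Nat.factorial (m - 1 - k) : ℝ) * (Nat.factorial k : ℝ)) / (Nat.factorial m : ℝ))
        = ((m.choose k : ℝ) * ((Nat.factorial (m - 1 - k) : ℝ) * (Nat.factorial k : ℝ))
            / (Nat.factorial m : ℝ)) * x ^ m / ((m - k : ℕ) : ℝ) := by
      ring
    rw [hrw, key]
    field_simp
  · intro k _
    apply Continuous.intervalIntegrable
    fun_prop

lemma sum_reindex (m : ℕ) :
    ∑ k ∈ Finset.range m, (1:ℝ) / ((m - k : ℕ) : ℝ) ^ 2
      = ∑ k ∈ Finset.Icc 1 m, 1 / (k : ℝ) ^ 2 := by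
  rw [← Finset.Ico_add_one_right_eq_Icc, Finset.sum_Ico_eq_sum_range]
  simp only [Nat.add_sub_cancel, add_comm 1]
  rw [← Finset.sum_range_reflect]
  apply Finset.sum_congr rfl
  intro k hk
  have hk' : k < m := Finset.mem_range.1 hk
  have h : m - (m - 1 - k) = k + 1 := by omega
  rw [h]

theorem stmt_4 (m : ℕ) (hm : 1 ≤ m) :
    ∫ x in (0 : ℝ)..1, (1 / x) * ∫ y in (0 : ℝ)..x, (1 / y) *
      ∫ z in (0 : ℝ)..y, (1 / z) * ((x - y) ^ m - (x - y + z) ^ m) =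
      -(1 / m) * ∑ k ∈ Finset.Icc 1 m, 1 / (k : ℝ) ^ 2 := by
  simp only [inner_int m]
  simp only [mid_int m hm]
  have hstep : ∫ x in (0:ℝ)..1, (1 / x) * (-(∑ k ∈ Finset.range m, 1 / ((m - k : ℕ) : ℝ) ^ 2) * x ^ m)
      = ∫ x in (0:ℝ)..1, -(∑ k ∈ Finset.range m, 1 / ((m - k : ℕ) : ℝ) ^ 2) * x ^ (m - 1) := by
    apply integral_congr_ne_zero
    intro x hx
    have e : m = (m - 1) + 1 := by omega
    rw [e, pow_succ']
    field_simp
    rw [Nat.add_sub_cancel]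
  rw [hstep, intervalIntegral.integral_const_mul, integral_pow]
  have hne : (m - 1 : ℕ) + 1 ≠ 0 := by omega
  rw [zero_pow hne, one_pow]
  have e : ((m - 1 : ℕ) : ℝ) + 1 = (m : ℝ) := by
    have : (m - 1 : ℕ) + 1 = m := by omega
    rw [← this]
    push_cast
    ring
  rw [e, sum_reindex m]
  ring
end

section
/- For every real t > 0, the triple integral f(t) = ∫_0^t (1/x) ∫_0^x (1/y) ∫_0^y (1/z) [sin x + sin(x-y) - sin(x-z) - sin(x-y+z)] dz dy dx is absolutely convergent, and |f(t)| ≤ 2t. -/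
open MeasureTheory Real

lemma key_id (x y z : ℝ) :
    sin x + sin (x - y) - sin (x - z) - sin (x - y + z)
      = -4 * sin (z / 2) * sin ((y - z) / 2) * sin (x - y / 2) := by
  have e : ∀ u v w : ℝ, sin (u + v + w) + sin (u - v - w) - sin (u + v - w) - sin (u - v + w)
      = -4 * sin w * sin v * sin u := by
    intro u v w
    simp only [sin_add, sin_sub, cos_add, cos_sub]
    ring
  have h := e (x - y / 2) ((y - z) / 2) (z / 2)
  rw [show x - y / 2 + (y - z) / 2 + z / 2 = x by ring,
      show x - y / 2 - (y - z) / 2 - z / 2 = x - y by ring,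
      show x - y / 2 + (y - z) / 2 - z / 2 = x - z by ring,
      show x - y / 2 - (y - z) / 2 + z / 2 = x - y + z by ring] at h
  exact h

lemma bound_one {x y z : ℝ} (hz : 0 < z) (hzy : z < y) (hyx : y < x) :
    |(sin x + sin (x - y) - sin (x - z) - sin (x - y + z)) / (x * y * z)| ≤ 1 := by
  have hy : 0 < y := hz.trans hzy
  have hx : 0 < x := hy.trans hyx
  rw [key_id, abs_div, div_le_one (by positivity)]
  have h1 : |sin (z / 2)| ≤ z / 2 := (abs_sin_le_abs).trans (by rw [abs_of_pos (by linarith)])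
  have h2 : |sin ((y - z) / 2)| ≤ y / 2 :=
    (abs_sin_le_abs).trans (by rw [abs_of_pos (by linarith)]; linarith)
  have h3 : |sin (x - y / 2)| ≤ x :=
    (abs_sin_le_abs).trans (by rw [abs_of_pos (by linarith)]; linarith)
  have := abs_nonneg (sin (z / 2))
  have := abs_nonneg (sin ((y - z) / 2))
  have := abs_nonneg (sin (x - y / 2))
  calc |(-4 : ℝ) * sin (z/2) * sin ((y-z)/2) * sin (x - y/2)|
      = 4 * |sin (z/2)| * |sin ((y-z)/2)| * |sin (x - y/2)| := by
        rw [abs_mul, abs_mul, abs_mul]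
        norm_num
    _ ≤ 4 * (z/2) * (y/2) * x := by gcongr
    _ ≤ |x * y * z| := by rw [abs_of_pos (by positivity)]; nlinarith

lemma bound_two {x y z : ℝ} (hz : 0 < z) (hzy : z < y) (hyx : y < x) :
    |(sin x + sin (x - y) - sin (x - z) - sin (x - y + z)) / (x * y * z)| ≤ 2 / (x * y) := by
  have hy : 0 < y := hz.trans hzy
  have hx : 0 < x := hy.trans hyx
  rw [key_id, abs_div, div_le_div_iff₀ (by positivity) (by positivity)]
  have h1 : |sin (z / 2)| ≤ z / 2 := (abs_sin_le_abs).trans (by rw [abs_of_pos (by linarith)])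
  have h2 : |sin ((y - z) / 2)| ≤ 1 := abs_sin_le_one _
  have h3 : |sin (x - y / 2)| ≤ 1 := abs_sin_le_one _
  have := abs_nonneg (sin (z / 2))
  have := abs_nonneg (sin ((y - z) / 2))
  have := abs_nonneg (sin (x - y / 2))
  have key : |(-4 : ℝ) * sin (z/2) * sin ((y-z)/2) * sin (x - y/2)|
      = 4 * |sin (z/2)| * |sin ((y-z)/2)| * |sin (x - y/2)| := by
    rw [abs_mul, abs_mul, abs_mul]; norm_num
  rw [key, abs_of_pos (by positivity : (0:ℝ) < x * y * z)]
  have h4 : |sin (z/2)| * |sin ((y-z)/2)| * |sin (x - y/2)| ≤ (z/2) * 1 * 1 := by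
    gcongr
  nlinarith [mul_le_mul_of_nonneg_right h4 (le_of_lt (mul_pos hx hy))]


lemma lint_bound (t : ℝ) (ht : 0 < t) :
    ∫⁻ p in {p : ℝ × ℝ × ℝ | 0 < p.2.2 ∧ p.2.2 < p.2.1 ∧ p.2.1 < p.1 ∧ p.1 < t},
      ENNReal.ofReal (2 / (p.1 * p.2.1)) ≤ ENNReal.ofReal (2 * t) := by
  set S := {p : ℝ × ℝ × ℝ | 0 < p.2.2 ∧ p.2.2 < p.2.1 ∧ p.2.1 < p.1 ∧ p.1 < t} with hSdef
  have m1 : Measurable fun p : ℝ × ℝ × ℝ => p.1 := measurable_fst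
  have m2 : Measurable fun p : ℝ × ℝ × ℝ => p.2.1 := measurable_snd.fst
  have m3 : Measurable fun p : ℝ × ℝ × ℝ => p.2.2 := measurable_snd.snd
  have hS : MeasurableSet S :=
    ((measurableSet_lt measurable_const m3).inter ((measurableSet_lt m3 m2).inter
      ((measurableSet_lt m2 m1).inter (measurableSet_lt m1 measurable_const))))
  have hC : Measurable fun p : ℝ × ℝ × ℝ => ENNReal.ofReal (2 / (p.1 * p.2.1)) :=
    (measurable_const.div (m1.mul m2)).ennreal_ofReal
  set F := S.indicator fun p : ℝ × ℝ × ℝ => ENNReal.ofReal (2 / (p.1 * p.2.1)) with hFdef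
  have hF : Measurable F := hC.indicator hS
  have inner : ∀ x : ℝ, (∫⁻ q : ℝ × ℝ, F (x, q))
      ≤ (Set.Ioo (0:ℝ) t).indicator (fun _ => ENNReal.ofReal 2) x := by
    intro x
    by_cases hx : 0 < x ∧ x < t
    · obtain ⟨hx1, hx2⟩ := hx
      have hx0 : x ≠ 0 := ne_of_gt hx1
      rw [Set.indicator_of_mem (show x ∈ Set.Ioo (0:ℝ) t from ⟨hx1, hx2⟩)]
      have hq : Measurable fun q : ℝ × ℝ => F (x, q) := hF.comp measurable_prodMk_left
      rw [show ((volume : Measure (ℝ × ℝ))) = (volume : Measure ℝ).prod volume from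
        Measure.volume_eq_prod ℝ ℝ, lintegral_prod _ hq.aemeasurable]
      have step : ∀ y : ℝ, (∫⁻ z : ℝ, F (x, (y, z)))
          ≤ (Set.Ioo (0:ℝ) x).indicator (fun _ => ENNReal.ofReal (2 / x)) y := by
        intro y
        have hz_eq : (fun z : ℝ => F (x, (y, z)))
            = ({z : ℝ | 0 < z ∧ z < y ∧ y < x ∧ x < t}).indicator
                (fun _ => ENNReal.ofReal (2 / (x * y))) := by
          funext z
          by_cases h : 0 < z ∧ z < y ∧ y < x ∧ x < t
          · have hmz : z ∈ {z : ℝ | 0 < z ∧ z < y ∧ y < x ∧ x < t} := h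
            have hmS : ((x, (y, z)) : ℝ × ℝ × ℝ) ∈ S := h
            rw [hFdef, Set.indicator_of_mem hmz, Set.indicator_of_mem hmS]
          · have hmz : z ∉ {z : ℝ | 0 < z ∧ z < y ∧ y < x ∧ x < t} := h
            have hmS : ((x, (y, z)) : ℝ × ℝ × ℝ) ∉ S := h
            rw [hFdef, Set.indicator_of_notMem hmz, Set.indicator_of_notMem hmS]
        rw [hz_eq]
        by_cases hy : 0 < y ∧ y < x
        · obtain ⟨hy1, hy2⟩ := hy
          have hy0 : y ≠ 0 := ne_of_gt hy1
          have hset : {z : ℝ | 0 < z ∧ z < y ∧ y < x ∧ x < t} = Set.Ioo 0 y := by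
            ext z
            simp only [Set.mem_setOf_eq, Set.mem_Ioo]
            exact ⟨fun ⟨a, b, _, _⟩ => ⟨a, b⟩, fun ⟨a, b⟩ => ⟨a, b, hy2, hx2⟩⟩
          rw [hset, lintegral_indicator measurableSet_Ioo, setLIntegral_const,
            Real.volume_Ioo, sub_zero,
            Set.indicator_of_mem (show y ∈ Set.Ioo (0:ℝ) x from ⟨hy1, hy2⟩),
            ← ENNReal.ofReal_mul (by positivity)]
          rw [show 2 / (x * y) * y = 2 / x by field_simp]
        · have hset : {z : ℝ | 0 < z ∧ z < y ∧ y < x ∧ x < t} = ∅ := by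
            ext z
            simp only [Set.mem_setOf_eq, Set.mem_empty_iff_false, iff_false, not_and]
            intro h1 h2 h3
            exact absurd ⟨h1.trans h2, h3⟩ hy
          rw [hset]
          simp
      calc (∫⁻ y : ℝ, ∫⁻ z : ℝ, F (x, (y, z)))
          ≤ ∫⁻ y : ℝ, (Set.Ioo (0:ℝ) x).indicator (fun _ => ENNReal.ofReal (2 / x)) y :=
            lintegral_mono step
        _ = ENNReal.ofReal (2 / x) * volume (Set.Ioo (0:ℝ) x) := by
            rw [lintegral_indicator measurableSet_Ioo, setLIntegral_const]
        _ = ENNReal.ofReal 2 := by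
            rw [Real.volume_Ioo, sub_zero, ← ENNReal.ofReal_mul (by positivity),
              show 2 / x * x = 2 by field_simp]
    · have hzero : ∀ q : ℝ × ℝ, F (x, q) = 0 := by
        intro q
        apply Set.indicator_of_notMem
        rintro ⟨h1, h2, h3, h4⟩
        exact hx ⟨(h1.trans h2).trans h3, h4⟩
      simp only [hzero, lintegral_zero]
      exact zero_le
  calc (∫⁻ p in S, ENNReal.ofReal (2 / (p.1 * p.2.1)))
      = ∫⁻ p, F p := (lintegral_indicator hS _).symm
    _ = ∫⁻ x : ℝ, ∫⁻ q : ℝ × ℝ, F (x, q) := by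
        rw [show ((volume : Measure (ℝ × ℝ × ℝ))) = (volume : Measure ℝ).prod volume from
          Measure.volume_eq_prod ℝ (ℝ × ℝ), lintegral_prod _ hF.aemeasurable]
    _ ≤ ∫⁻ x : ℝ, (Set.Ioo (0:ℝ) t).indicator (fun _ => ENNReal.ofReal 2) x :=
        lintegral_mono inner
    _ = ENNReal.ofReal 2 * volume (Set.Ioo (0:ℝ) t) := by
        rw [lintegral_indicator measurableSet_Ioo, setLIntegral_const]
    _ = ENNReal.ofReal (2 * t) := by
        rw [Real.volume_Ioo, sub_zero, ← ENNReal.ofReal_mul (by norm_num)]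


theorem stmt_7 (t : ℝ) (ht : 0 < t) :
    IntegrableOn
      (fun p : ℝ × ℝ × ℝ =>
        (Real.sin p.1 + Real.sin (p.1 - p.2.1) - Real.sin (p.1 - p.2.2)
          - Real.sin (p.1 - p.2.1 + p.2.2)) / (p.1 * p.2.1 * p.2.2))
      {p : ℝ × ℝ × ℝ | 0 < p.2.2 ∧ p.2.2 < p.2.1 ∧ p.2.1 < p.1 ∧ p.1 < t} ∧
    |∫ p in {p : ℝ × ℝ × ℝ | 0 < p.2.2 ∧ p.2.2 < p.2.1 ∧ p.2.1 < p.1 ∧ p.1 < t},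
        (Real.sin p.1 + Real.sin (p.1 - p.2.1) - Real.sin (p.1 - p.2.2)
          - Real.sin (p.1 - p.2.1 + p.2.2)) / (p.1 * p.2.1 * p.2.2)| ≤ 2 * t := by
  set f : ℝ × ℝ × ℝ → ℝ := fun p =>
    (Real.sin p.1 + Real.sin (p.1 - p.2.1) - Real.sin (p.1 - p.2.2)
      - Real.sin (p.1 - p.2.1 + p.2.2)) / (p.1 * p.2.1 * p.2.2) with hfdef
  set S : Set (ℝ × ℝ × ℝ) :=
    {p : ℝ × ℝ × ℝ | 0 < p.2.2 ∧ p.2.2 < p.2.1 ∧ p.2.1 < p.1 ∧ p.1 < t} with hSdef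
  have m1 : Measurable fun p : ℝ × ℝ × ℝ => p.1 := measurable_fst
  have m2 : Measurable fun p : ℝ × ℝ × ℝ => p.2.1 := measurable_snd.fst
  have m3 : Measurable fun p : ℝ × ℝ × ℝ => p.2.2 := measurable_snd.snd
  have hS : MeasurableSet S :=
    ((measurableSet_lt measurable_const m3).inter ((measurableSet_lt m3 m2).inter
      ((measurableSet_lt m2 m1).inter (measurableSet_lt m1 measurable_const))))
  have hmf : Measurable f := by
    apply Measurable.div
    · fun_prop
    · fun_prop
  have hsub : S ⊆ Set.Ioo 0 t ×ˢ (Set.Ioo 0 t ×ˢ Set.Ioo 0 t) := by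
    rintro ⟨x, y, z⟩ ⟨h1, h2, h3, h4⟩
    have hy : 0 < y := h1.trans h2
    have hx : 0 < x := hy.trans h3
    exact ⟨⟨hx, h4⟩, ⟨hy, h3.trans h4⟩, ⟨h1, (h2.trans h3).trans h4⟩⟩
  have hfin : volume S < ⊤ := by
    refine lt_of_le_of_lt (measure_mono hsub) ?_
    rw [Measure.volume_eq_prod ℝ (ℝ × ℝ), Measure.prod_prod,
      Measure.volume_eq_prod ℝ ℝ, Measure.prod_prod, Real.volume_Ioo]
    exact ENNReal.mul_lt_top ENNReal.ofReal_lt_top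
      (ENNReal.mul_lt_top ENNReal.ofReal_lt_top ENNReal.ofReal_lt_top)
  have hint : IntegrableOn f S := by
    refine Integrable.mono' (g := fun _ => (1 : ℝ))
      ((integrableOn_const_iff (C := (1:ℝ))).mpr (Or.inr hfin))
      (hmf.aestronglyMeasurable.restrict) ?_
    refine (ae_restrict_iff' hS).mpr (ae_of_all _ ?_)
    rintro ⟨x, y, z⟩ ⟨h1, h2, h3, h4⟩
    simp only [hfdef, Real.norm_eq_abs]
    exact bound_one h1 h2 h3
  refine ⟨hint, ?_⟩
  have h1 : |∫ p in S, f p| ≤ (∫⁻ p in S, ENNReal.ofReal ‖f p‖).toReal := by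
    simpa [Real.norm_eq_abs] using
      MeasureTheory.norm_integral_le_lintegral_norm (μ := volume.restrict S) f
  have h2 : (∫⁻ p in S, ENNReal.ofReal ‖f p‖)
      ≤ ∫⁻ p in S, ENNReal.ofReal (2 / (p.1 * p.2.1)) := by
    refine lintegral_mono_ae ((ae_restrict_iff' hS).mpr (ae_of_all _ ?_))
    rintro ⟨x, y, z⟩ ⟨hh1, hh2, hh3, hh4⟩
    refine ENNReal.ofReal_le_ofReal ?_
    simp only [hfdef, Real.norm_eq_abs]
    exact bound_two hh1 hh2 hh3
  have h3 := lint_bound t ht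
  have h4 : (∫⁻ p in S, ENNReal.ofReal ‖f p‖).toReal ≤ 2 * t := by
    refine ENNReal.toReal_le_of_le_ofReal (by positivity) ?_
    exact (h2.trans h3)
  linarith
end

section
/- The function g(x) = (1/x)·((1/2)·log²(1-x) + ∑_{n=1}^∞ ((1-x)^n - 1)/n²) is integrable on the interval (0,1). -/
open MeasureTheory

-- per-term bound
lemma term_bound {x : ℝ} (hx0 : 0 < x) (hx1 : x < 1) (n : ℕ) :
    ‖((1 - x) ^ (n + 1) - 1) / ((n : ℝ) + 1) ^ 2‖ ≤
      Real.sqrt x * (1 / (((n : ℝ) + 1) * Real.sqrt ((n : ℝ) + 1))) := by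
  have hy0 : (0:ℝ) ≤ 1 - x := by linarith
  set a : ℝ := 1 - (1 - x) ^ (n + 1) with ha
  have hpowle : (1 - x) ^ (n + 1) ≤ 1 := pow_le_one₀ hy0 (by linarith)
  have hpow0 : (0:ℝ) ≤ (1 - x) ^ (n + 1) := pow_nonneg hy0 _
  have ha0 : 0 ≤ a := by simp [ha]; linarith
  have ha1 : a ≤ 1 := by simp [ha]; linarith
  have hbern : (1:ℝ) + (n+1 : ℕ) * (-x) ≤ (1 + (-x)) ^ (n+1) :=
    one_add_mul_le_pow (by linarith) (n+1)
  have haled : a ≤ ((n:ℝ)+1) * x := by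
    push_cast at hbern
    have : (1:ℝ) - ((n:ℝ)+1) * x ≤ (1 - x) ^ (n+1) := by
      rw [show (1:ℝ) - x = 1 + (-x) by ring]; nlinarith [hbern]
    simp [ha]; nlinarith
  have hnpos : (0:ℝ) < (n:ℝ) + 1 := by positivity
  have hasl : a ≤ Real.sqrt (((n:ℝ)+1) * x) := by
    rw [Real.le_sqrt ha0]
    · nlinarith
    · positivity
  have hs : Real.sqrt (((n:ℝ)+1) * x) = Real.sqrt ((n:ℝ)+1) * Real.sqrt x :=
    Real.sqrt_mul (le_of_lt hnpos) x
  have hnorm : ‖((1 - x) ^ (n + 1) - 1) / ((n : ℝ) + 1) ^ 2‖ = a / ((n:ℝ)+1)^2 := by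
    rw [Real.norm_eq_abs, abs_div, abs_of_nonneg (by positivity : (0:ℝ) ≤ ((n:ℝ)+1)^2)]
    congr 1
    rw [abs_of_nonpos (by linarith)]
    simp [ha]
  rw [hnorm]
  have hsq : Real.sqrt ((n:ℝ)+1) * Real.sqrt ((n:ℝ)+1) = (n:ℝ)+1 :=
    Real.mul_self_sqrt (le_of_lt hnpos)
  have hsqpos : 0 < Real.sqrt ((n:ℝ)+1) := Real.sqrt_pos.mpr hnpos
  rw [div_le_iff₀ (by positivity)]
  calc a ≤ Real.sqrt ((n:ℝ)+1) * Real.sqrt x := hs ▸ hasl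
    _ = Real.sqrt x * (1 / (((n : ℝ) + 1) * Real.sqrt ((n : ℝ) + 1))) * ((n:ℝ)+1)^2 := by
        field_simp
        linear_combination hsq

lemma bnd_summable : Summable (fun n : ℕ => 1 / (((n : ℝ) + 1) * Real.sqrt ((n : ℝ) + 1))) := by
  have h : Summable (fun n : ℕ => 1 / (n : ℝ) ^ ((3:ℝ)/2)) :=
    Real.summable_one_div_nat_rpow.mpr (by norm_num)
  have h2 := (summable_nat_add_iff 1).mpr h
  refine h2.congr fun n => ?_
  have hpos : (0:ℝ) < (n:ℝ) + 1 := by positivity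
  push_cast
  rw [show ((3:ℝ)/2) = 1 + 1/2 by norm_num, Real.rpow_add hpos, Real.rpow_one,
    ← Real.sqrt_eq_rpow]

lemma series_summable {x : ℝ} (hx0 : 0 < x) (hx1 : x < 1) :
    Summable (fun n : ℕ => ((1 - x) ^ (n + 1) - 1) / ((n : ℝ) + 1) ^ 2) :=
  Summable.of_norm_bounded (bnd_summable.mul_left (Real.sqrt x)) (term_bound hx0 hx1)

lemma tsum_bound {x : ℝ} (hx0 : 0 < x) (hx1 : x < 1) :
    ‖∑' n : ℕ, ((1 - x) ^ (n + 1) - 1) / ((n : ℝ) + 1) ^ 2‖ ≤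
      Real.sqrt x * ∑' n : ℕ, 1 / (((n : ℝ) + 1) * Real.sqrt ((n : ℝ) + 1)) := by
  have hs := series_summable hx0 hx1
  calc ‖∑' n : ℕ, ((1 - x) ^ (n + 1) - 1) / ((n : ℝ) + 1) ^ 2‖
      ≤ ∑' n : ℕ, ‖((1 - x) ^ (n + 1) - 1) / ((n : ℝ) + 1) ^ 2‖ :=
        norm_tsum_le_tsum_norm hs.norm
    _ ≤ ∑' n : ℕ, Real.sqrt x * (1 / (((n : ℝ) + 1) * Real.sqrt ((n : ℝ) + 1))) :=
        Summable.tsum_le_tsum (term_bound hx0 hx1) hs.norm (bnd_summable.mul_left _)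
    _ = Real.sqrt x * ∑' n : ℕ, 1 / (((n : ℝ) + 1) * Real.sqrt ((n : ℝ) + 1)) :=
        tsum_mul_left

lemma meas_tsum : AEStronglyMeasurable
    (fun x : ℝ => ∑' n : ℕ, ((1 - x) ^ (n + 1) - 1) / ((n : ℝ) + 1) ^ 2)
    (volume.restrict (Set.Ioo (0:ℝ) 1)) := by
  apply aestronglyMeasurable_of_tendsto_ae
    (f := fun N (x : ℝ) => ∑ n ∈ Finset.range N, ((1 - x) ^ (n + 1) - 1) / ((n : ℝ) + 1) ^ 2)
    (u := Filter.atTop)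
  · intro N
    apply Measurable.aestronglyMeasurable
    exact Finset.measurable_sum _ fun n _ =>
      (((measurable_const.sub measurable_id).pow_const _).sub measurable_const).div_const _
  · filter_upwards [ae_restrict_mem measurableSet_Ioo] with x hx
    exact (series_summable hx.1 hx.2).hasSum.tendsto_sum_nat

set_option maxHeartbeats 1000000 in
theorem stmt_12 :
    IntegrableOn
      (fun x : ℝ => (1 / x) *
        ((1 / 2) * (Real.log (1 - x)) ^ 2 +
          ∑' n : ℕ, ((1 - x) ^ (n + 1) - 1) / ((n : ℝ) + 1) ^ 2))
      (Set.Ioo 0 1) := by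
  set C : ℝ := ∑' n : ℕ, 1 / (((n : ℝ) + 1) * Real.sqrt ((n : ℝ) + 1)) with hC
  have hC0 : 0 ≤ C := tsum_nonneg fun n => by positivity
  have h1 : IntegrableOn (fun x : ℝ => x ^ (-(1/2):ℝ)) (Set.Ioo (0:ℝ) 1) := by
    have := intervalIntegral.intervalIntegrable_rpow' (a := (0:ℝ)) (b := 1)
      (r := -(1/2)) (by norm_num)
    exact this.1.mono_set Set.Ioo_subset_Ioc_self
  have h2 : IntegrableOn (fun x : ℝ => (1-x) ^ (-(1/2):ℝ)) (Set.Ioo (0:ℝ) 1) := by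
    have h := (intervalIntegral.intervalIntegrable_rpow' (a := (0:ℝ)) (b := 1)
      (r := -(1/2)) (by norm_num)).comp_sub_left 1
    norm_num at h
    exact h.symm.1.mono_set Set.Ioo_subset_Ioc_self
  have hD : IntegrableOn
      (fun x : ℝ => (16 + C) * x ^ (-(1/2):ℝ) + 16 * (1-x) ^ (-(1/2):ℝ))
      (Set.Ioo (0:ℝ) 1) := (h1.const_mul _).add (h2.const_mul _)
  have hmeas : AEStronglyMeasurable
      (fun x : ℝ => (1 / x) *
        ((1 / 2) * (Real.log (1 - x)) ^ 2 +
          ∑' n : ℕ, ((1 - x) ^ (n + 1) - 1) / ((n : ℝ) + 1) ^ 2))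
      (volume.restrict (Set.Ioo (0:ℝ) 1)) := by
    apply AEStronglyMeasurable.mul
    · exact (measurable_const.div measurable_id).aestronglyMeasurable
    · apply AEStronglyMeasurable.add
      · exact (((Real.measurable_log.comp (measurable_const.sub measurable_id)).pow_const
          2).const_mul _).aestronglyMeasurable
      · exact meas_tsum
  apply Integrable.mono' hD hmeas
  filter_upwards [ae_restrict_mem measurableSet_Ioo] with x hx
  obtain ⟨hx0, hx1⟩ := hx
  have hsx : (0:ℝ) < Real.sqrt x := Real.sqrt_pos.mpr hx0
  have hsx1 : Real.sqrt x ≤ 1 := by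
    rw [show (1:ℝ) = Real.sqrt 1 by simp]
    exact Real.sqrt_le_sqrt hx1.le
  have hp : x ^ (-(1/2):ℝ) = 1 / Real.sqrt x := by
    rw [Real.rpow_neg hx0.le, Real.sqrt_eq_rpow]
    ring
  have hq0 : (0:ℝ) < (1-x) ^ (-(1/2):ℝ) := Real.rpow_pos_of_pos (by linarith) _
  set L : ℝ := Real.log (1 - x) with hL
  set T : ℝ := ∑' n : ℕ, ((1 - x) ^ (n + 1) - 1) / ((n : ℝ) + 1) ^ 2 with hT
  have hTb : ‖T‖ ≤ Real.sqrt x * C := tsum_bound hx0 hx1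
  have hTx : (1/x) * ‖T‖ ≤ C * x ^ (-(1/2):ℝ) := by
    rw [hp]
    have hxeq : Real.sqrt x ^ 2 = x := Real.sq_sqrt hx0.le
    calc (1/x) * ‖T‖ ≤ (1/x) * (Real.sqrt x * C) :=
          mul_le_mul_of_nonneg_left hTb (one_div_nonneg.mpr hx0.le)
      _ = C * (1 / Real.sqrt x) := by
          field_simp
          linear_combination C * hxeq
  have hL0 : 0 ≤ -L := by
    have : Real.log (1-x) ≤ 0 := Real.log_nonpos (by linarith) (by linarith)
    simp only [hL]; linarith
  have hL2 : (1/x) * ((1/2) * L^2) ≤ 16 * x ^ (-(1/2):ℝ) + 16 * (1-x) ^ (-(1/2):ℝ) := by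
    rcases le_or_gt x (1/2) with hhalf | hhalf
    · have hlog : -L ≤ 2 * x := by
        have h' := Real.log_le_sub_one_of_pos (x := (1-x)⁻¹) (inv_pos.mpr (by linarith))
        rw [Real.log_inv] at h'
        have hne : (1:ℝ) - x ≠ 0 := by linarith
        have he : (1-x)⁻¹ - 1 = x / (1-x) := by
          field_simp
          ring
        rw [he] at h'
        have h2' : x / (1-x) ≤ 2 * x := by
          rw [div_le_iff₀ (by linarith)]
          nlinarith
        linarith
      have hsq : L^2 ≤ 4 * x^2 := by nlinarith
      have h16 : (1:ℝ) ≤ 16 * x ^ (-(1/2):ℝ) := by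
        rw [hp]
        have : (1:ℝ) ≤ 1 / Real.sqrt x := by
          rw [le_div_iff₀ hsx]; linarith
        linarith
      have hmain : (1/x) * ((1/2) * L^2) ≤ 2 * x := by
        rw [div_mul_eq_mul_div, div_le_iff₀ hx0]
        nlinarith
      nlinarith [hq0]
    · have hy0 : (0:ℝ) < 1 - x := by linarith
      have hlog : -L ≤ 4 * (1-x) ^ (-(1/4):ℝ) := by
        have h' := Real.log_le_rpow_div (x := (1-x)⁻¹) (inv_nonneg.mpr (by linarith)) (ε := 1/4) (by norm_num)
        rw [Real.log_inv] at h'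
        have e : ((1-x)⁻¹) ^ ((1:ℝ)/4) = (1-x) ^ (-(1/4):ℝ) := by
          rw [Real.inv_rpow hy0.le, ← Real.rpow_neg_one ((1-x) ^ ((1:ℝ)/4)),
            ← Real.rpow_mul hy0.le]
          norm_num
        rw [e] at h'
        have : (1-x) ^ (-(1/4):ℝ) / (1/4) = 4 * (1-x) ^ (-(1/4):ℝ) := by ring
        simp only [hL]; linarith
      have hq4 : (0:ℝ) ≤ (1-x) ^ (-(1/4):ℝ) := (Real.rpow_pos_of_pos hy0 _).le
      have hsqq : ((1-x) ^ (-(1/4):ℝ))^2 = (1-x) ^ (-(1/2):ℝ) := by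
        rw [← Real.rpow_natCast ((1-x) ^ (-(1/4):ℝ)) 2, ← Real.rpow_mul hy0.le]
        norm_num
      have hsq : L^2 ≤ 16 * (1-x) ^ (-(1/2):ℝ) := by nlinarith
      have hxinv : 1/x ≤ 2 := by
        rw [div_le_iff₀ hx0]; linarith
      have hp0 : (0:ℝ) ≤ x ^ (-(1/2):ℝ) := (Real.rpow_pos_of_pos hx0 _).le
      have h1x0 : (0:ℝ) ≤ 1/x := by positivity
      nlinarith [mul_le_mul_of_nonneg_right hxinv (sq_nonneg L),
        mul_le_mul_of_nonneg_left hsq h1x0]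
  have hA : (0:ℝ) ≤ (1/2) * L^2 := by positivity
  calc ‖(1 / x) * ((1 / 2) * L ^ 2 + T)‖
      = (1/x) * ‖(1/2) * L^2 + T‖ := by
        rw [norm_mul, Real.norm_eq_abs (1/x), abs_of_pos (by positivity : (0:ℝ) < 1/x)]
    _ ≤ (1/x) * ((1/2) * L^2 + ‖T‖) := by
        apply mul_le_mul_of_nonneg_left _ (by positivity : (0:ℝ) ≤ 1/x)
        calc ‖(1/2) * L^2 + T‖ ≤ ‖(1/2) * L^2‖ + ‖T‖ := norm_add_le _ _
          _ = (1/2) * L^2 + ‖T‖ := by rw [Real.norm_eq_abs, abs_of_nonneg hA]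
    _ = (1/x) * ((1/2) * L^2) + (1/x) * ‖T‖ := by ring
    _ ≤ (16 * x ^ (-(1/2):ℝ) + 16 * (1-x) ^ (-(1/2):ℝ)) + C * x ^ (-(1/2):ℝ) :=
        add_le_add hL2 hTx
    _ = (16 + C) * x ^ (-(1/2):ℝ) + 16 * (1-x) ^ (-(1/2):ℝ) := by ring
end

section
/- For 0 < a < 1, ∫_0^1 ∫_0^a x/((1-x)(1-xy)) dx dy - ∫_a^1 ∫_0^{a/x} 1/((1-y)(1-xy)) dy dx = (1/2)·log²(1-a) - π²/6 + ∑_{n=1}^∞ (1-a)^n/n². -/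
open MeasureTheory Set Filter Real

noncomputable def Li2 (x : ℝ) : ℝ := ∑' n : ℕ, x ^ (n + 1) / ((n : ℝ) + 1) ^ 2

lemma summable_inv_sq : Summable (fun n : ℕ => 1 / ((n:ℝ)+1)^2) := by
  have h : Summable (fun n : ℕ => 1 / (n:ℝ)^2) := by
    simpa using Real.summable_one_div_nat_pow.2 one_lt_two
  have := (summable_nat_add_iff 1).2 h
  refine this.congr fun n => by push_cast; ring

lemma Li2_norm_bound {x : ℝ} (hx : |x| ≤ 1) (n : ℕ) :
    ‖x ^ (n + 1) / ((n:ℝ)+1)^2‖ ≤ 1 / ((n:ℝ)+1)^2 := by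
  have h1 : (0:ℝ) < ((n:ℝ)+1)^2 := by positivity
  rw [norm_div, norm_pow, Real.norm_eq_abs, Real.norm_eq_abs, abs_of_pos h1]
  gcongr
  exact pow_le_one₀ (abs_nonneg x) hx

lemma Li2_summable {x : ℝ} (hx : |x| ≤ 1) :
    Summable (fun n : ℕ => x ^ (n + 1) / ((n:ℝ)+1)^2) :=
  Summable.of_norm_bounded summable_inv_sq (Li2_norm_bound hx)

lemma Li2_continuousOn : ContinuousOn Li2 (Icc (-1:ℝ) 1) := by
  apply continuousOn_tsum (u := fun n : ℕ => 1 / ((n:ℝ)+1)^2)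
    (fun i => (by continuity : Continuous fun x : ℝ => x ^ (i+1) / ((i:ℝ)+1)^2).continuousOn)
    summable_inv_sq
  intro n x hx
  exact Li2_norm_bound (abs_le.2 ⟨hx.1, hx.2⟩) n

lemma Li2_one : Li2 1 = Real.pi ^ 2 / 6 := by
  have h := hasSum_zeta_two
  have h3 : HasSum (fun n : ℕ => (1:ℝ) / ((n:ℝ)+1) ^ 2)
      (Real.pi ^ 2 / 6 - ∑ i ∈ Finset.range 1, (1:ℝ) / (i:ℝ)^2) := by
    have h4 := (hasSum_nat_add_iff' (f := fun n : ℕ => (1:ℝ) / (n:ℝ)^2) 1).2 h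
    exact h4.congr_fun fun n => by push_cast; ring
  simp only [Finset.range_one, Finset.sum_singleton, Nat.cast_zero] at h3
  norm_num at h3
  unfold Li2
  rw [← h3.tsum_eq]
  exact tsum_congr fun n => by rw [one_pow, one_div]

lemma log_series {x : ℝ} (hx : x ∈ Ioo (0:ℝ) 1) :
    HasSum (fun n : ℕ => x ^ n / ((n:ℝ)+1)) (-Real.log (1-x) / x) := by
  have hax : |x| < 1 := by rw [abs_of_pos hx.1]; exact hx.2
  have h := (Real.hasSum_pow_div_log_of_abs_lt_one hax).div_const x
  refine h.congr_fun fun n => ?_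
  have hx0 : x ≠ 0 := ne_of_gt hx.1
  field_simp [pow_succ]
  ring

lemma Li2_hasDerivAt {x : ℝ} (hx : x ∈ Ioo (0:ℝ) 1) :
    HasDerivAt Li2 (-Real.log (1-x) / x) x := by
  obtain ⟨hx0, hx1⟩ := hx
  set r : ℝ := (1 + x) / 2 with hr
  have hr0 : 0 < r := by positivity
  have hrx : x < r := by simp only [hr]; linarith
  have hr1 : r < 1 := by simp only [hr]; linarith
  have hs : IsOpen (Ioo (-r) r) := isOpen_Ioo
  have hmem : x ∈ Ioo (-r) r := ⟨by linarith, hrx⟩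
  have key : HasDerivAt Li2 (∑' n : ℕ, x ^ n / ((n:ℝ)+1)) x := by
    apply hasDerivAt_of_tendstoUniformlyOn (f := fun (t : Finset ℕ) (y : ℝ) =>
        ∑ n ∈ t, y ^ (n+1) / ((n:ℝ)+1)^2)
      (f' := fun (t : Finset ℕ) (y : ℝ) => ∑ n ∈ t, y ^ n / ((n:ℝ)+1))
      (g' := fun y => ∑' n : ℕ, y ^ n / ((n:ℝ)+1)) (l := atTop) hs ?_ ?_ ?_ hmem
    · apply tendstoUniformlyOn_tsum (u := fun n : ℕ => r ^ n)
        (summable_geometric_of_lt_one hr0.le hr1)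
      intro n y hy
      have hyr : |y| ≤ r := by
        rw [abs_le]; exact ⟨hy.1.le, hy.2.le⟩
      rw [norm_div, norm_pow, Real.norm_eq_abs, Real.norm_eq_abs]
      have h1 : |((n:ℝ)+1)| = (n:ℝ)+1 := abs_of_pos (by positivity)
      rw [h1]
      calc |y| ^ n / ((n:ℝ)+1) ≤ |y| ^ n :=
            div_le_self (by positivity) (by linarith [Nat.cast_nonneg (α := ℝ) n])
        _ ≤ r ^ n := pow_le_pow_left₀ (abs_nonneg y) hyr n
    · filter_upwards with t y hy
      apply HasDerivAt.fun_sum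
      intro n _
      have h := (hasDerivAt_pow (n+1) y).div_const (((n:ℝ)+1)^2)
      refine h.congr_deriv ?_
      have : ((n:ℝ)+1) ≠ 0 := by positivity
      push_cast
      field_simp
    · intro y hy
      have hy1 : |y| ≤ 1 := by
        rw [abs_le]; constructor <;> [linarith [hy.1]; linarith [hy.2]]
      exact (Li2_summable hy1).hasSum
  rwa [(log_series ⟨hx0, hx1⟩).tsum_eq] at key

lemma L1inner {a x : ℝ} (ha1 : a < 1) (hx : x ∈ Icc (0:ℝ) a) :
    ∫ y in (0:ℝ)..1, x / ((1 - x) * (1 - x * y)) = -Real.log (1 - x) / (1 - x) := by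
  obtain ⟨hx0, hxa⟩ := hx
  have hx1 : x < 1 := lt_of_le_of_lt hxa ha1
  have h1x : (1:ℝ) - x ≠ 0 := by linarith
  have key : ∀ y ∈ uIcc (0:ℝ) 1, 1 - x * y ≠ 0 := by
    intro y hy
    rw [uIcc_of_le one_pos.le] at hy
    nlinarith [hy.1, hy.2]
  have hderiv : ∀ y ∈ uIcc (0:ℝ) 1,
      HasDerivAt (fun y => -Real.log (1 - x * y) / (1 - x)) (x / ((1 - x) * (1 - x * y))) y := by
    intro y hy
    have h1 : HasDerivAt (fun y : ℝ => 1 - x * y) (-x) y := by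
      simpa using ((hasDerivAt_id y).const_mul x).const_sub 1
    have h2 := (h1.log (key y hy)).neg.div_const (1 - x)
    refine h2.congr_deriv ?_
    have := key y hy
    field_simp
  have hcont : ContinuousOn (fun y : ℝ => x / ((1 - x) * (1 - x * y))) (uIcc (0:ℝ) 1) := by
    apply ContinuousOn.div continuousOn_const
    · fun_prop
    · intro y hy
      exact mul_ne_zero h1x (key y hy)
  rw [intervalIntegral.integral_eq_sub_of_hasDerivAt hderiv hcont.intervalIntegrable]
  simp

lemma L1outer {a : ℝ} (ha : 0 < a) (ha1 : a < 1) :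
    ∫ x in (0:ℝ)..a, -Real.log (1 - x) / (1 - x) = 1 / 2 * Real.log (1 - a) ^ 2 := by
  have key : ∀ x ∈ uIcc (0:ℝ) a, (1:ℝ) - x ≠ 0 := by
    intro x hx
    rw [uIcc_of_le ha.le] at hx
    nlinarith [hx.1, hx.2]
  have hderiv : ∀ x ∈ uIcc (0:ℝ) a,
      HasDerivAt (fun x => Real.log (1 - x) ^ 2 / 2) (-Real.log (1 - x) / (1 - x)) x := by
    intro x hx
    have h1 : HasDerivAt (fun x : ℝ => 1 - x) (-1) x := by
      simpa using (hasDerivAt_id x).const_sub 1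
    have h2 := ((h1.log (key x hx)).pow 2).div_const 2
    have hne := key x hx
    refine h2.congr_deriv ?_
    field_simp
    ring
  have hcont : ContinuousOn (fun x : ℝ => -Real.log (1 - x) / (1 - x)) (uIcc (0:ℝ) a) := by
    apply ContinuousOn.div
    · exact (Real.continuousOn_log.comp (by fun_prop) fun x hx => key x hx).neg
    · fun_prop
    · exact key
  rw [intervalIntegral.integral_eq_sub_of_hasDerivAt hderiv hcont.intervalIntegrable]
  simp
  ring

lemma swap1 {a : ℝ} (ha : 0 < a) (ha1 : a < 1) :
    (∫ y in (0:ℝ)..1, ∫ x in (0:ℝ)..a, x / ((1 - x) * (1 - x * y)))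
      = ∫ x in (0:ℝ)..a, ∫ y in (0:ℝ)..1, x / ((1 - x) * (1 - x * y)) := by
  have h1 : (0:ℝ) ≤ 1 := one_pos.le
  have h2 : (0:ℝ) ≤ a := ha.le
  rw [intervalIntegral.integral_of_le h1, intervalIntegral.integral_of_le h2]
  simp_rw [intervalIntegral.integral_of_le h2, intervalIntegral.integral_of_le h1]
  have hint : Integrable (Function.uncurry fun (y x : ℝ) => x / ((1 - x) * (1 - x * y)))
      ((volume.restrict (Ioc (0:ℝ) 1)).prod (volume.restrict (Ioc (0:ℝ) a))) := by
    rw [Measure.prod_restrict]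
    have hc : ContinuousOn (Function.uncurry fun (y x : ℝ) => x / ((1 - x) * (1 - x * y)))
        (Icc (0:ℝ) 1 ×ˢ Icc (0:ℝ) a) := by
      apply ContinuousOn.div
      · fun_prop
      · fun_prop
      · rintro ⟨y, x⟩ ⟨⟨hy0, hy1⟩, ⟨hx0, hxa⟩⟩
        have h3 : (1:ℝ) - x ≠ 0 := by nlinarith
        have h4 : (1:ℝ) - x * y ≠ 0 := by nlinarith
        exact mul_ne_zero h3 h4
    exact (hc.integrableOn_compact (isCompact_Icc.prod isCompact_Icc)).mono_set
      (prod_mono Ioc_subset_Icc_self Ioc_subset_Icc_self)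
  exact MeasureTheory.integral_integral_swap hint

lemma L2inner {a x : ℝ} (ha : 0 < a) (hx : x ∈ Ioo a 1) :
    ∫ y in (0:ℝ)..(a / x), 1 / ((1 - y) * (1 - x * y))
      = (Real.log (1 - a) + Real.log x - Real.log (x - a)) / (1 - x) := by
  obtain ⟨hax, hx1⟩ := hx
  have hx0 : 0 < x := ha.trans hax
  have hax1 : a / x < 1 := (div_lt_one hx0).2 hax
  have hax0 : 0 ≤ a / x := by positivity
  have h1x : (1:ℝ) - x ≠ 0 := by linarith
  have key : ∀ y ∈ uIcc (0:ℝ) (a / x), (1 - y ≠ 0) ∧ (1 - x * y ≠ 0) := by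
    intro y hy
    rw [uIcc_of_le hax0] at hy
    obtain ⟨hy0, hy1⟩ := hy
    have hya : y < 1 := lt_of_le_of_lt hy1 hax1
    have hxy : x * y ≤ a := by
      calc x * y ≤ x * (a / x) := by gcongr
        _ = a := by field_simp
    constructor <;> nlinarith
  have hderiv : ∀ y ∈ uIcc (0:ℝ) (a / x),
      HasDerivAt (fun y => (Real.log (1 - x * y) - Real.log (1 - y)) / (1 - x))
        (1 / ((1 - y) * (1 - x * y))) y := by
    intro y hy
    obtain ⟨k1, k2⟩ := key y hy
    have h1 : HasDerivAt (fun y : ℝ => 1 - x * y) (-x) y := by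
      simpa using ((hasDerivAt_id y).const_mul x).const_sub 1
    have h2 : HasDerivAt (fun y : ℝ => 1 - y) (-1) y := by
      simpa using (hasDerivAt_id y).const_sub 1
    have h3 := ((h1.log k2).sub (h2.log k1)).div_const (1 - x)
    refine h3.congr_deriv ?_
    field_simp
    ring
  have hcont : ContinuousOn (fun y : ℝ => 1 / ((1 - y) * (1 - x * y))) (uIcc (0:ℝ) (a / x)) := by
    apply ContinuousOn.div continuousOn_const
    · fun_prop
    · intro y hy
      exact mul_ne_zero (key y hy).1 (key y hy).2
  rw [intervalIntegral.integral_eq_sub_of_hasDerivAt hderiv hcont.intervalIntegrable]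
  have hxx : x * (a / x) = a := by field_simp
  rw [hxx]
  have h2 : (1:ℝ) - a / x = (x - a) / x := by field_simp
  rw [h2, Real.log_div (by linarith) (ne_of_gt hx0)]
  simp
  ring

lemma L2outer {a : ℝ} (ha : 0 < a) (ha1 : a < 1) :
    ∫ x in a..(1:ℝ), (Real.log (1 - a) + Real.log x - Real.log (x - a)) / (1 - x)
      = Real.pi ^ 2 / 6 - Li2 (1 - a) := by
  have h1a : (0:ℝ) < 1 - a := by linarith
  set H : ℝ → ℝ := fun x => Li2 (1 - x) - Li2 ((1 - x) / (1 - a)) with hH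
  set F : ℝ → ℝ := fun x => (Real.log (1 - a) + Real.log x - Real.log (x - a)) / (1 - x) with hF
  have hcont : ContinuousOn H (Icc a 1) := by
    apply ContinuousOn.sub
    · apply Li2_continuousOn.comp (by fun_prop)
      intro x hx
      constructor <;> [linarith [hx.2]; linarith [hx.1, ha.le]]
    · apply Li2_continuousOn.comp (by fun_prop)
      intro x hx
      have h0 : 0 ≤ (1 - x) / (1 - a) := by
        apply div_nonneg <;> linarith [hx.2]
      have h1 : (1 - x) / (1 - a) ≤ 1 := by
        rw [div_le_one h1a]; linarith [hx.1]
      constructor <;> linarith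
  have hderiv : ∀ x ∈ Ioo a 1, HasDerivAt H (F x) x := by
    intro x hx
    obtain ⟨hax, hx1⟩ := hx
    have hx0 : 0 < x := ha.trans hax
    have ht1 : (1 - x) ∈ Ioo (0:ℝ) 1 := ⟨by linarith, by linarith⟩
    have ht2 : (1 - x) / (1 - a) ∈ Ioo (0:ℝ) 1 := by
      constructor
      · exact div_pos (by linarith) h1a
      · rw [div_lt_one h1a]; linarith
    have d1 : HasDerivAt (fun x : ℝ => 1 - x) (-1) x := by
      simpa using (hasDerivAt_id x).const_sub 1
    have d2 : HasDerivAt (fun x : ℝ => (1 - x) / (1 - a)) (-1 / (1 - a)) x := by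
      simpa using d1.div_const (1 - a)
    have c1 := (Li2_hasDerivAt ht1).comp x d1
    have c2 := (Li2_hasDerivAt ht2).comp x d2
    have hcomb := c1.sub c2
    have e1 : (1:ℝ) - (1 - x) = x := by ring
    have e2 : (1:ℝ) - (1 - x) / (1 - a) = (x - a) / (1 - a) := by field_simp; ring
    rw [e1, e2] at hcomb
    have l1 : (1:ℝ) - x ≠ 0 := by linarith
    have hval : F x = -Real.log x / (1 - x) * -1
        - -Real.log ((x - a) / (1 - a)) / ((1 - x) / (1 - a)) * (-1 / (1 - a)) := by
      rw [hF]
      simp only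
      rw [Real.log_div (by linarith) (by linarith)]
      field_simp
      ring
    rw [hval]
    exact hcomb
  have hpos : ∀ x ∈ Ioo a 1, 0 ≤ F x := by
    intro x hx
    obtain ⟨hax, hx1⟩ := hx
    have hx0 : 0 < x := ha.trans hax
    apply div_nonneg _ (by linarith)
    have : Real.log (1 - a) + Real.log x - Real.log (x - a)
        = Real.log ((1 - a) * x / (x - a)) := by
      rw [Real.log_div (by positivity) (by linarith), Real.log_mul (by linarith) (by linarith)]
    rw [this]
    apply Real.log_nonneg
    rw [le_div_iff₀ (by linarith)]
    nlinarith
  have hint : IntervalIntegrable F volume a 1 := by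
    apply intervalIntegral.intervalIntegrable_deriv_of_nonneg
    · rwa [uIcc_of_le ha1.le]
    · simpa [min_eq_left ha1.le, max_eq_right ha1.le] using hderiv
    · simpa [min_eq_left ha1.le, max_eq_right ha1.le] using hpos
  rw [intervalIntegral.integral_eq_sub_of_hasDeriv_right_of_le ha1.le hcont
    (fun x hx => (hderiv x hx).hasDerivWithinAt) hint]
  have : H 1 = 0 := by simp [hH, Li2]
  rw [this, hH]
  simp only
  have : (1 - a) / (1 - a) = 1 := div_self (ne_of_gt h1a)
  rw [this, Li2_one]
  ring

theorem stmt_16 (a : ℝ) (ha : 0 < a) (ha1 : a < 1) :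
    (∫ y in (0 : ℝ)..1, ∫ x in (0 : ℝ)..a, x / ((1 - x) * (1 - x * y))) -
      (∫ x in a..(1 : ℝ), ∫ y in (0 : ℝ)..(a / x), 1 / ((1 - y) * (1 - x * y))) =
      (1 / 2) * (Real.log (1 - a)) ^ 2 - Real.pi ^ 2 / 6 +
        ∑' n : ℕ, (1 - a) ^ (n + 1) / ((n : ℝ) + 1) ^ 2 := by
  have h1 : (∫ y in (0:ℝ)..1, ∫ x in (0:ℝ)..a, x / ((1 - x) * (1 - x * y)))
      = 1 / 2 * Real.log (1 - a) ^ 2 := by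
    rw [swap1 ha ha1]
    rw [intervalIntegral.integral_congr (g := fun x => -Real.log (1 - x) / (1 - x)) ?_]
    · exact L1outer ha ha1
    · intro x hx
      rw [uIcc_of_le ha.le] at hx
      exact L1inner ha1 hx
  have h2 : (∫ x in a..(1:ℝ), ∫ y in (0:ℝ)..(a / x), 1 / ((1 - y) * (1 - x * y)))
      = Real.pi ^ 2 / 6 - Li2 (1 - a) := by
    rw [intervalIntegral.integral_congr_ae
      (g := fun x => (Real.log (1 - a) + Real.log x - Real.log (x - a)) / (1 - x)) ?_]
    · exact L2outer ha ha1
    · have hone : ({(1:ℝ)} : Set ℝ)ᶜ ∈ ae volume := compl_mem_ae_iff.2 (measure_singleton 1)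
      filter_upwards [hone] with x hx hmem
      rw [uIoc_of_le ha1.le] at hmem
      have hx1 : x ≠ 1 := by simpa using hx
      have : x ∈ Ioo a 1 := ⟨hmem.1, lt_of_le_of_ne hmem.2 hx1⟩
      exact L2inner ha this
  rw [h1, h2]
  have hL : Li2 (1 - a) = ∑' n : ℕ, (1 - a) ^ (n + 1) / ((n : ℝ) + 1) ^ 2 := rfl
  rw [hL]
  ring
end

section
/- For Riesz's function F(x) = ∑_{n=1}^∞ (-1)^{n+1} x^n / ((n-1)!·ζ(2n)), one has F(x) = x·∑_{n=1}^∞ (μ(n)/n²)·exp(-x/n²) for all x > 0, where μ is the Möbius function and ζ the Riemann zeta function. -/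
set_option maxHeartbeats 1000000


open ArithmeticFunction
open scoped ArithmeticFunction.Moebius

private lemma invZeta18 (n : ℕ) :
    (riemannZeta (2 * ((n : ℂ) + 1)))⁻¹
      = ∑' m : ℕ, (μ (m + 1) : ℂ) / ((m : ℂ) + 1) ^ (2 * (n + 1)) := by
  have hcast : (2 * ((n : ℂ) + 1)) = ((2 * (n + 1) : ℕ) : ℂ) := by push_cast; ring
  have h2 : 1 < 2 * (n + 1) := by omega
  have hs : 1 < (2 * ((n : ℂ) + 1)).re := by
    rw [hcast, Complex.natCast_re]; exact_mod_cast h2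
  have hmu := LSeries_one_mul_Lseries_moebius hs
  rw [LSeries_one_eq_riemannZeta hs] at hmu
  have heq : LSeries (fun k => ((μ k : ℤ) : ℂ)) (2 * ((n : ℂ) + 1))
      = (riemannZeta (2 * ((n : ℂ) + 1)))⁻¹ :=
    eq_inv_of_mul_eq_one_left (by rw [mul_comm]; exact hmu)
  rw [← heq, LSeries,
    Summable.tsum_eq_zero_add (LSeriesSummable_moebius_iff.mpr hs)]
  rw [LSeries.term_zero, zero_add]
  refine tsum_congr fun m => ?_
  rw [LSeries.term_of_ne_zero (Nat.succ_ne_zero m), hcast, Complex.cpow_natCast]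
  push_cast
  ring

theorem stmt_18 (x : ℝ) (hx : 0 < x) :
    ∑' n : ℕ, (-1 : ℂ) ^ n * (x : ℂ) ^ (n + 1) /
        ((n.factorial : ℂ) * riemannZeta (2 * (n + 1))) =
      (x : ℂ) * ∑' n : ℕ,
        ((μ (n + 1) : ℂ) / ((n : ℂ) + 1) ^ 2) * Complex.exp (-(x : ℂ) / ((n : ℂ) + 1) ^ 2) := by
  set F : ℕ → ℕ → ℂ := fun n m =>
    (-1 : ℂ) ^ n * (x : ℂ) ^ (n + 1) * (μ (m + 1) : ℂ) /
      ((n.factorial : ℂ) * ((m : ℂ) + 1) ^ (2 * (n + 1))) with hF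
  -- summability of the double series
  have hsum : Summable (Function.uncurry F) := by
    apply Summable.of_norm
    have h1 : Summable (fun n : ℕ => x ^ (n + 1) / n.factorial) := by
      have := (Real.summable_pow_div_factorial x).mul_left x
      refine this.congr fun n => ?_
      rw [pow_succ]; ring
    have h2 : Summable (fun m : ℕ => 1 / ((m : ℝ) + 1) ^ 2) := by
      have := (summable_nat_add_iff (f := fun n : ℕ => 1 / (n : ℝ) ^ 2) 1).mpr
        (Real.summable_one_div_nat_pow.mpr one_lt_two)
      refine this.congr fun m => ?_
      push_cast; ring_nf
    have hB : Summable fun p : ℕ × ℕ =>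
        (x ^ (p.1 + 1) / p.1.factorial) * (1 / ((p.2 : ℝ) + 1) ^ 2) :=
      h1.mul_of_nonneg h2 (fun n => by positivity) (fun m => by positivity)
    refine Summable.of_nonneg_of_le (fun _ => norm_nonneg _) (fun p => ?_) hB
    obtain ⟨n, m⟩ := p
    have hm1 : ((m : ℂ) + 1) = ((m + 1 : ℕ) : ℂ) := by push_cast; ring
    have hnorm : ‖Function.uncurry F (n, m)‖ =
        x ^ (n + 1) * |((μ (m + 1) : ℤ) : ℝ)| /
          ((n.factorial : ℝ) * ((m : ℝ) + 1) ^ (2 * (n + 1))) := by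
      simp only [Function.uncurry, hF, norm_div, norm_mul, norm_pow, norm_neg, norm_one,
        one_pow, one_mul, Complex.norm_real, Complex.norm_natCast, hm1, Complex.norm_intCast]
      rw [Real.norm_eq_abs, abs_of_pos hx]
      push_cast
      ring
    rw [hnorm]
    have hden : (n.factorial : ℝ) * ((m : ℝ) + 1) ^ 2
        ≤ (n.factorial : ℝ) * ((m : ℝ) + 1) ^ (2 * (n + 1)) := by
      apply mul_le_mul_of_nonneg_left _ (by positivity)
      apply pow_le_pow_right₀ (by linarith [Nat.cast_nonneg (α := ℝ) m])
      omega
    have hnum : x ^ (n + 1) * |((μ (m + 1) : ℤ) : ℝ)| ≤ x ^ (n + 1) := by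
      have : |((μ (m + 1) : ℤ) : ℝ)| ≤ 1 := by
        exact_mod_cast (abs_moebius_le_one (n := m + 1))
      nlinarith [pow_pos hx (n + 1)]
    calc x ^ (n + 1) * |((μ (m + 1) : ℤ) : ℝ)| /
          ((n.factorial : ℝ) * ((m : ℝ) + 1) ^ (2 * (n + 1)))
        ≤ x ^ (n + 1) / ((n.factorial : ℝ) * ((m : ℝ) + 1) ^ 2) := by
          apply div_le_div₀ (by positivity) hnum (by positivity) hden
      _ = (x ^ (n + 1) / n.factorial) * (1 / ((m : ℝ) + 1) ^ 2) := by
          field_simp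
  -- rewrite left side as iterated sum
  have hL : ∀ n : ℕ, (-1 : ℂ) ^ n * (x : ℂ) ^ (n + 1) /
      ((n.factorial : ℂ) * riemannZeta (2 * ((n : ℂ) + 1))) = ∑' m, F n m := by
    intro n
    rw [div_eq_mul_inv, mul_inv, invZeta18 n, ← mul_assoc, ← tsum_mul_left]
    refine tsum_congr fun m => ?_
    simp only [hF]
    have hfac : ((n.factorial : ℂ)) ≠ 0 := by exact_mod_cast n.factorial_ne_zero
    have hm : ((m : ℂ) + 1) ≠ 0 := by exact_mod_cast Nat.cast_add_one_ne_zero (R := ℂ) m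
    have hp : ((m : ℂ) + 1) ^ (2 * (n + 1)) ≠ 0 := pow_ne_zero _ hm
    field_simp
  have hR : ∀ m : ℕ, ∑' n, F n m =
      (x : ℂ) * (((μ (m + 1) : ℤ) : ℂ) / ((m : ℂ) + 1) ^ 2 *
        Complex.exp (-(x : ℂ) / ((m : ℂ) + 1) ^ 2)) := by
    intro m
    have hm : ((m : ℂ) + 1) ≠ 0 := by
      exact_mod_cast Nat.cast_add_one_ne_zero (R := ℂ) m
    have hexp : Complex.exp (-(x : ℂ) / ((m : ℂ) + 1) ^ 2)
        = ∑' n : ℕ, (-(x : ℂ) / ((m : ℂ) + 1) ^ 2) ^ n / n.factorial := by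
      rw [Complex.exp_eq_exp_ℂ, NormedSpace.exp_eq_tsum_div]
    rw [hexp, ← tsum_mul_left, ← tsum_mul_left]
    refine tsum_congr fun n => ?_
    simp only [hF]
    have hfac : ((n.factorial : ℂ)) ≠ 0 := by exact_mod_cast n.factorial_ne_zero
    rw [pow_mul]
    set q : ℂ := ((m : ℂ) + 1) ^ 2 with hq
    have hq0 : q ≠ 0 := pow_ne_zero 2 hm
    field_simp
    have hqq : q ^ n * q⁻¹ ^ n = 1 := by rw [← mul_pow, mul_inv_cancel₀ hq0, one_pow]
    linear_combination (-((x : ℂ) * (x : ℂ) ^ n * (((μ (m + 1) : ℤ) : ℂ)) * q * (-1) ^ n)) * hqq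
  calc ∑' n : ℕ, (-1 : ℂ) ^ n * (x : ℂ) ^ (n + 1) /
        ((n.factorial : ℂ) * riemannZeta (2 * ((n : ℂ) + 1)))
      = ∑' (n : ℕ) (m : ℕ), F n m := tsum_congr hL
    _ = ∑' (m : ℕ) (n : ℕ), F n m := (Summable.tsum_comm hsum).symm
    _ = ∑' (m : ℕ), (x : ℂ) * (((μ (m + 1) : ℤ) : ℂ) / ((m : ℂ) + 1) ^ 2 *
          Complex.exp (-(x : ℂ) / ((m : ℂ) + 1) ^ 2)) := tsum_congr hR
    _ = (x : ℂ) * ∑' n : ℕ,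
          ((μ (n + 1) : ℂ) / ((n : ℂ) + 1) ^ 2) * Complex.exp (-(x : ℂ) / ((n : ℂ) + 1) ^ 2) :=
        tsum_mul_left
end
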